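/- Let Ω be a compact metric space with a finite Borel measure σ, let K : Ω × Ω → ℝ be a continuous symmetric kernel (K(x,y) = K(y,x)), and suppose the linear span F of {K(a, ·) : a ∈ Ω} is a finite-dimensional subspace of the continuous real-valued functions on Ω. If for points q_1, …, q_n ∈ Ω the functions K(q_1, ·), …, K(q_n, ·) span F, then there exist weights ω_1, …, ω_n ∈ ℝ such that ∫_Ω f dσ = Σ_{j=1}^n ω_j f(q_j) for all f ∈ F. -/

import Mathlib

open MeasureTheory
open scoped Matrix

open scoped RealInnerProductSpace in
lemma aux_symm_matrix_range {n : ℕ} (G : Matrix (Fin n) (Fin n) ℝ) (hG : Gᵀ = G)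
    (h : Fin n → ℝ) (H : ∀ u : Fin n → ℝ, G.mulVec u = 0 → h ⬝ᵥ u = 0) :
    ∃ ω : Fin n → ℝ, G.mulVec ω = h := by
  set T : EuclideanSpace ℝ (Fin n) →ₗ[ℝ] EuclideanSpace ℝ (Fin n) := Matrix.toEuclideanLin G
    with hT
  set S : Submodule ℝ (EuclideanSpace ℝ (Fin n)) := LinearMap.range T with hS
  have hTapp : ∀ x : EuclideanSpace ℝ (Fin n), ∀ i, T x i = G.mulVec x i := by
    intro x i
    rfl
  have hinner : ∀ x y : EuclideanSpace ℝ (Fin n), ⟪x, y⟫ = (fun i => x i) ⬝ᵥ (fun i => y i) := by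
    intro x y
    simp [PiLp.inner_apply, dotProduct, mul_comm]
  have hsymm : ∀ x y : EuclideanSpace ℝ (Fin n), ⟪T x, y⟫ = ⟪x, T y⟫ := by
    intro x y
    have h1 : ⟪T x, y⟫ = G.mulVec (fun i => x i) ⬝ᵥ (fun i => y i) := hinner _ _
    have h2 : ⟪x, T y⟫ = (fun i => x i) ⬝ᵥ G.mulVec (fun i => y i) := hinner _ _
    rw [h1, h2, dotProduct_comm, Matrix.dotProduct_mulVec, ← Matrix.mulVec_transpose,
      hG, dotProduct_comm]
  set h' : EuclideanSpace ℝ (Fin n) := (WithLp.equiv 2 (Fin n → ℝ)).symm h with hh'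
  set p : EuclideanSpace ℝ (Fin n) := (S.orthogonalProjectionOnto h' : EuclideanSpace ℝ (Fin n))
  obtain ⟨w, hw⟩ := (S.orthogonalProjectionOnto h' : S).2
  set u : EuclideanSpace ℝ (Fin n) := h' - p with hu
  have humem : u ∈ Sᗮ := S.sub_starProjection_mem_orthogonal h'
  have hTu : T u = 0 := by
    have h0 : ∀ y : EuclideanSpace ℝ (Fin n), ⟪T u, y⟫ = 0 := by
      intro y
      rw [real_inner_comm, ← hsymm]
      exact humem (T y) (LinearMap.mem_range_self T y)
    have := h0 (T u)
    exact inner_self_eq_zero.mp this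
  have hGu : G.mulVec (fun i => u i) = 0 := by
    funext i
    have := congrArg (fun v : EuclideanSpace ℝ (Fin n) => v i) hTu
    simpa [hTapp] using this
  have hhu : ⟪h', u⟫ = 0 := by
    rw [hinner]
    exact H _ hGu
  have hpu : ⟪p, u⟫ = 0 := humem p (S.orthogonalProjectionOnto h').2
  have huu : ⟪u, u⟫ = 0 := by
    have : ⟪h' - p, u⟫ = ⟪h', u⟫ - ⟪p, u⟫ := inner_sub_left _ _ _
    rw [← hu] at this
    rw [this, hhu, hpu, sub_zero]
  have hu0 : u = 0 := inner_self_eq_zero.mp huu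
  have hph : h' = p := by
    have h2 : h' - p = 0 := by rw [← hu, hu0]
    exact sub_eq_zero.mp h2
  have hTwh : T w = h' := by rw [hw]; exact hph.symm
  refine ⟨fun i => w i, ?_⟩
  funext i
  have h3 := congrArg (fun v : EuclideanSpace ℝ (Fin n) => v i) hTwh
  exact h3


/-- Let `Ω` be a compact metric space with a finite Borel measure `σ`, `K` a
continuous symmetric kernel whose sections `K a = K (a, ·)` span a finite-dimensional subspace
`F` of the continuous functions. If `K (q 1), …, K (q n)` span `F`, then there exist weights
`ω` such that `(q, ω)` is a cubature for `F`. -/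
theorem cubature_of_kernel_frame {Ω : Type*} [MetricSpace Ω] [CompactSpace Ω]
    [MeasurableSpace Ω] [BorelSpace Ω] (σ : Measure Ω) [IsFiniteMeasure σ]
    (K : Ω → Ω → ℝ) (hKcont : Continuous fun p : Ω × Ω => K p.1 p.2)
    (hKsym : ∀ x y, K x y = K y x)
    (F : Submodule ℝ (Ω → ℝ)) (hF : F = Submodule.span ℝ {f | ∃ a, f = K a})
    (hfd : FiniteDimensional ℝ F)
    (n : ℕ) (q : Fin n → Ω)
    (hspan : Submodule.span ℝ (Set.range fun j => K (q j)) = F) :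
    ∃ ω : Fin n → ℝ, ∀ f ∈ F, ∫ x, f x ∂σ = ∑ j, ω j * f (q j) := by
  classical
  have hKa_cont : ∀ a : Ω, Continuous (K a) := fun a =>
    hKcont.comp (Continuous.prodMk_right a)
  have hKa_int : ∀ a : Ω, Integrable (K a) σ :=
    fun a => (hKa_cont a).integrable_of_hasCompactSupport (isClosed_tsupport _).isCompact
  set G : Matrix (Fin n) (Fin n) ℝ := Matrix.of fun j k => K (q j) (q k) with hGdef
  have hGapp : ∀ j k, G j k = K (q j) (q k) := fun j k => rfl
  have hGsym : Gᵀ = G := by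
    ext j k
    exact hKsym (q k) (q j)
  set h : Fin n → ℝ := fun k => ∫ x, K (q k) x ∂σ with hhdef
  have hrep : ∀ f ∈ F, ∃ c : Fin n → ℝ, ∑ k, c k • K (q k) = f := by
    intro f hf
    rw [← hspan] at hf
    exact (Submodule.mem_span_range_iff_exists_fun ℝ).mp hf
  have happof : ∀ (c : Fin n → ℝ) (f : Ω → ℝ), (∑ k, c k • K (q k)) = f →
      ∀ b, f b = ∑ k, c k * K (q k) b := by
    intro c f hcf b
    rw [← hcf]
    simp [Finset.sum_apply]
  have hvanish : ∀ u : Fin n → ℝ, G.mulVec u = 0 → ∀ a, ∑ k, u k * K (q k) a = 0 := by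
    intro u hGu a
    have hKaF : K a ∈ F := hF ▸ Submodule.subset_span ⟨a, rfl⟩
    obtain ⟨d, hd⟩ := hrep (K a) hKaF
    have happ := happof d (K a) hd
    calc ∑ k, u k * K (q k) a = ∑ k, u k * K a (q k) := by
          refine Finset.sum_congr rfl fun k _ => ?_
          rw [hKsym]
      _ = ∑ k, u k * ∑ j, d j * K (q j) (q k) := by
          refine Finset.sum_congr rfl fun k _ => ?_
          rw [← happ (q k)]
      _ = ∑ k, ∑ j, d j * (G j k * u k) := by
          refine Finset.sum_congr rfl fun k _ => ?_
          rw [Finset.mul_sum]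
          refine Finset.sum_congr rfl fun j _ => ?_
          rw [hGapp]
          ring
      _ = ∑ j, d j * (G.mulVec u) j := by
          rw [Finset.sum_comm]
          refine Finset.sum_congr rfl fun j _ => ?_
          rw [Matrix.mulVec, dotProduct, Finset.mul_sum]
      _ = 0 := by
          rw [hGu]
          simp
  have hsumint : ∀ c : Fin n → ℝ, ∫ x, ∑ k, c k * K (q k) x ∂σ = ∑ k, c k * h k := by
    intro c
    rw [integral_finset_sum _ (fun k _ => ((hKa_int (q k)).const_mul (c k)))]
    refine Finset.sum_congr rfl fun k _ => ?_
    rw [integral_const_mul]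
  have hH : ∀ u, G.mulVec u = 0 → h ⬝ᵥ u = 0 := by
    intro u hGu
    have h1 : (fun x => ∑ k, u k * K (q k) x) = fun _ => (0 : ℝ) := by
      funext a
      exact hvanish u hGu a
    have h2 : ∫ x, ∑ k, u k * K (q k) x ∂σ = 0 := by
      rw [h1]
      simp
    rw [hsumint u] at h2
    rw [← h2]
    rw [dotProduct]
    refine Finset.sum_congr rfl fun k _ => ?_
    ring
  obtain ⟨ω, hω⟩ := aux_symm_matrix_range G hGsym h hH
  refine ⟨ω, ?_⟩
  intro f hf
  obtain ⟨c, hc⟩ := hrep f hf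
  have happ := happof c f hc
  calc ∫ x, f x ∂σ = ∫ x, ∑ k, c k * K (q k) x ∂σ := by
        refine integral_congr_ae (Filter.Eventually.of_forall fun x => ?_)
        exact happ x
    _ = ∑ k, c k * h k := hsumint c
    _ = ∑ k, c k * (G.mulVec ω) k := by rw [hω]
    _ = ∑ k, ∑ j, ω j * (c k * K (q k) (q j)) := by
        refine Finset.sum_congr rfl fun k _ => ?_
        rw [Matrix.mulVec, dotProduct, Finset.mul_sum]
        refine Finset.sum_congr rfl fun j _ => ?_
        rw [hGapp]
        ring
    _ = ∑ j, ω j * ∑ k, c k * K (q k) (q j) := by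
        rw [Finset.sum_comm]
        refine Finset.sum_congr rfl fun j _ => ?_
        rw [Finset.mul_sum]
    _ = ∑ j, ω j * f (q j) := by
        refine Finset.sum_congr rfl fun j _ => ?_
        rw [← happ (q j)]
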